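/- Assume chi > 1 and eta > 0. For tol in (0,1) define L(tol) by L(tol)+1 = (chi/c2)*(log(1/tol) + c1 + log(2*eta/(chi-1))), where c1 = log(V_0^{eta/chi} * Q_S^{-eta/chi} * Q_W) and c2 = 2*eta*log(chi)/(chi-1). Then W(L(tol),tol) * tol^{2} tends, as tol -> 0+, to the constant C2 = C_alpha^2 * V_0^{(chi-1)/chi} * Q_S^{1/chi} * chi^{2*chi/(chi-1)} * (chi-1)^{-2}. -/

import Mathlib

open Filter Real

section
variable (χ eta : ℝ)

private lemma hEtop (hχ1 : 1 < χ) : Tendsto (fun x : ℝ => Real.exp (x * Real.log χ)) atTop atTop :=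
  Real.tendsto_exp_atTop.comp (Tendsto.atTop_mul_const (Real.log_pos hχ1) tendsto_id)

private lemma hinvE (hχ1 : 1 < χ) :
    Tendsto (fun x : ℝ => 1 / Real.exp (x * Real.log χ)) atTop (nhds 0) := by
  simpa [Function.comp_def, one_div] using tendsto_inv_atTop_zero.comp (hEtop χ hχ1)

private lemma hinv (hχ1 : 1 < χ) :
    Tendsto (fun x : ℝ => 1 / (1 - Real.exp (x * Real.log χ))) atTop (nhds 0) := by
  have hb : Tendsto (fun x : ℝ => Real.exp (x * Real.log χ) - 1) atTop atTop :=
    tendsto_atTop_add_const_right atTop (-1) (hEtop χ hχ1)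
  have h := (tendsto_inv_atTop_zero.comp hb).neg
  rw [neg_zero] at h
  refine h.congr fun x => ?_
  simp only [Function.comp]
  rw [one_div, neg_inv, neg_sub]

private lemma hmu (hχ1 : 1 < χ) :
    Tendsto (fun x : ℝ => Real.exp (x * Real.log χ) / (1 - Real.exp (x * Real.log χ)))
      atTop (nhds (-1)) := by
  have h := (tendsto_const_nhds (x := (-1:ℝ)) (f := atTop)).add (hinv χ hχ1)
  rw [add_zero] at h
  refine h.congr' ?_
  filter_upwards [(hEtop χ hχ1).eventually (eventually_gt_atTop 1)] with x hx
  have h1 : 1 - Real.exp (x * Real.log χ) ≠ 0 := sub_ne_zero.mpr (ne_of_gt hx).symm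
  field_simp
  ring

private lemma hxi (hχ1 : 1 < χ) :
    Tendsto (fun x : ℝ => x / (1 - Real.exp (x * Real.log χ))) atTop (nhds 0) := by
  have hlog : 0 < Real.log χ := Real.log_pos hχ1
  have hA : Tendsto (fun x : ℝ => x / Real.exp (x * Real.log χ)) atTop (nhds 0) := by
    have h := (Real.tendsto_pow_mul_exp_neg_atTop_nhds_zero 1)
    have h2 : Tendsto (fun x : ℝ => x * Real.log χ) atTop atTop :=
      Tendsto.atTop_mul_const hlog tendsto_id
    have h3 := (h.comp h2).const_mul (1 / Real.log χ)
    rw [mul_zero] at h3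
    refine h3.congr fun x => ?_
    simp only [Function.comp, pow_one]
    rw [Real.exp_neg]
    field_simp
  have h := hA.mul (hmu χ hχ1)
  rw [zero_mul] at h
  refine h.congr fun x => ?_
  rw [div_mul_div_comm, mul_comm x, mul_div_mul_left _ _ (Real.exp_ne_zero _)]

private lemma hquot (hχ1 : 1 < χ) :
    Tendsto (fun x : ℝ => (1 - Real.exp (x * Real.log χ) / χ) / (1 - Real.exp (x * Real.log χ)))
      atTop (nhds (1 / χ)) := by
  have h := (hinv χ hχ1).sub ((hmu χ hχ1).div_const χ)
  rw [zero_sub] at h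
  have h2 : -(-1 / χ) = 1 / χ := by ring
  rw [h2] at h
  exact h.congr fun x => by ring

private lemma hlam (hχ1 : 1 < χ) (heta : 0 < eta) :
    Tendsto (fun x : ℝ =>
      Real.log ((1 + 2 * eta * (1 - Real.exp (x * Real.log χ)) / (1 - χ)) / Real.exp (x * Real.log χ)))
      atTop (nhds (Real.log (2 * eta / (χ - 1)))) := by
  have hχm : (0:ℝ) < χ - 1 := by linarith
  have h3' : (1:ℝ) - χ ≠ 0 := by intro h; rw [sub_eq_zero] at h; exact (ne_of_lt hχ1) h
  have hbase : Tendsto (fun x : ℝ =>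
      (1 + 2 * eta * (1 - Real.exp (x * Real.log χ)) / (1 - χ)) / Real.exp (x * Real.log χ))
      atTop (nhds (2 * eta / (χ - 1))) := by
    have h1 := hinvE χ hχ1
    have h := h1.add (((h1.sub (tendsto_const_nhds (x := (1:ℝ)))).const_mul (2 * eta / (1 - χ))))
    have hv : (0:ℝ) + 2 * eta / (1 - χ) * (0 - 1) = 2 * eta / (χ - 1) := by
      field_simp
      ring
    rw [hv] at h
    refine h.congr fun x => ?_
    have h2' : Real.exp (x * Real.log χ) ≠ 0 := Real.exp_ne_zero _
    field_simp
  have hpos : (0:ℝ) < 2 * eta / (χ - 1) := by positivity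
  exact ((Real.continuousAt_log (ne_of_gt hpos)).tendsto.comp hbase)

end

noncomputable def Fsum (χ eta Q_W Q_S V0 C_alpha A c2 : ℝ) (x : ℝ) : ℝ :=
  (-(1/eta) * (1-χ)) * (A * (1/(1 - Real.exp (x * Real.log χ)))
      - (c2/χ) * (x/(1 - Real.exp (x * Real.log χ))))
  + Real.log (C_alpha^2 * V0)
  + ((1 - Real.exp (x * Real.log χ)/χ)/(1 - Real.exp (x * Real.log χ))) * Real.log (Q_S/V0)
  + ((1/eta) * (1-χ)) * (1/(1 - Real.exp (x * Real.log χ))) * Real.log Q_W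
  + (-(2*χ/(1-χ)) * ((1 - Real.exp (x * Real.log χ)/χ)/(1 - Real.exp (x * Real.log χ)))
      - 2 * (Real.exp (x * Real.log χ)/(1 - Real.exp (x * Real.log χ)))) * Real.log χ
  + 2 * Real.log ((1 + 2*eta*(1 - Real.exp (x * Real.log χ))/(1-χ))/Real.exp (x * Real.log χ))
  + 2 * Real.log χ * (x/(1 - Real.exp (x * Real.log χ)))
  + ((1/eta) * (1-χ)) * ((1/(1 - Real.exp (x * Real.log χ)))
        * Real.log ((1 + 2*eta*(1 - Real.exp (x * Real.log χ))/(1-χ))/Real.exp (x * Real.log χ))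
      + Real.log χ * (x/(1 - Real.exp (x * Real.log χ))))
  + Real.log ((1/(2*eta))^2)

private lemma Fsum_tendsto (χ eta Q_W Q_S V0 C_alpha A c2 : ℝ)
    (hχ1 : 1 < χ) (heta : 0 < eta) :
    Tendsto (Fsum χ eta Q_W Q_S V0 C_alpha A c2) atTop
      (nhds (Real.log (C_alpha^2 * V0) + Real.log (Q_S/V0) * (1/χ)
        + Real.log χ * (2*χ/(χ-1)) + Real.log (2*eta/(χ-1)) * 2
        + Real.log ((1/(2*eta))^2))) := by
  have hχ0 : (0:ℝ) < χ := lt_trans one_pos hχ1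
  have h1χ : (1:ℝ) - χ ≠ 0 := by intro h; rw [sub_eq_zero] at h; exact (ne_of_lt hχ1) h
  have T1 := Tendsto.const_mul (-(1/eta) * (1-χ))
    ((Tendsto.const_mul A (hinv χ hχ1)).sub (Tendsto.const_mul (c2/χ) (hxi χ hχ1)))
  have T2 := tendsto_const_nhds (α := ℝ) (f := atTop) (x := Real.log (C_alpha^2 * V0))
  have T3 := (hquot χ hχ1).mul_const (Real.log (Q_S/V0))
  have T4 := ((hinv χ hχ1).const_mul ((1/eta) * (1-χ))).mul_const (Real.log Q_W)
  have T5 := (((hquot χ hχ1).const_mul (-(2*χ/(1-χ)))).sub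
      ((hmu χ hχ1).const_mul 2)).mul_const (Real.log χ)
  have T6 := (hlam χ eta hχ1 heta).const_mul 2
  have T7 := (hxi χ hχ1).const_mul (2 * Real.log χ)
  have T8 := (((hinv χ hχ1).mul (hlam χ eta hχ1 heta)).add
      ((hxi χ hχ1).const_mul (Real.log χ))).const_mul ((1/eta) * (1-χ))
  have T9 := tendsto_const_nhds (α := ℝ) (f := atTop) (x := Real.log ((1/(2*eta))^2))
  have H := (((((((T1.add T2).add T3).add T4).add T5).add T6).add T7).add T8).add T9
  unfold Fsum
  convert H using 2
  have hχm : χ - 1 ≠ 0 := by intro h; rw [sub_eq_zero] at h; exact (ne_of_lt hχ1) h.symm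
  field_simp [hχm]
  ring

set_option maxHeartbeats 2000000 in
/-- Corollary 2.2 (χ > 1): with `L(tol)` chosen as the upper bound of (2.21),
`W(L(tol),tol) * tol² → C₂` as `tol → 0⁺`. -/
theorem mlmc_asymptotic_work_chi_gt_one
    (χ eta Q_W Q_S V0 C_alpha : ℝ)
    (hχ1 : 1 < χ) (heta : 0 < eta)
    (hQW : 0 < Q_W) (hQS : 0 < Q_S) (hV0 : 0 < V0) (hCα : 0 < C_alpha)
    (W : ℝ → ℝ → ℝ)
    (hW : ∀ L tol : ℝ, W L tol =
      tol ^ (-(2 + (1 / eta) * (1 - χ) / (1 - χ ^ (L + 1))))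
        * (C_alpha ^ 2 * V0 * (Q_S / V0) ^ ((1 - χ ^ L) / (1 - χ ^ (L + 1)))
            * Q_W ^ ((1 / eta) * (1 - χ) / (1 - χ ^ (L + 1)))
            * χ ^ (-(2 * χ / (1 - χ)) * (1 - χ ^ L) / (1 - χ ^ (L + 1))
                + 2 * L * χ ^ (L + 1) / (1 - χ ^ (L + 1))))
        * ((1 / (2 * eta)) ^ 2
            * (1 + 2 * eta * (1 - χ ^ (L + 1)) / (1 - χ))
                ^ (2 * (1 + (1 / (2 * eta)) * (1 - χ) / (1 - χ ^ (L + 1))))))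
    (c1 c2 : ℝ)
    (hc1 : c1 = Real.log (V0 ^ (eta / χ) * Q_S ^ (-(eta / χ)) * Q_W))
    (hc2 : c2 = 2 * eta * Real.log χ / (χ - 1))
    (Lf : ℝ → ℝ)
    (hLf : ∀ tol : ℝ, Lf tol + 1 =
      (χ / c2) * (Real.log (1 / tol) + c1 + Real.log (2 * eta / (χ - 1)))) :
    Tendsto (fun tol => W (Lf tol) tol * tol ^ (2 : ℝ))
      (nhdsWithin 0 (Set.Ioi 0))
      (nhds (C_alpha ^ 2 * V0 ^ ((χ - 1) / χ) * Q_S ^ (1 / χ)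
        * χ ^ (2 * χ / (χ - 1)) * (χ - 1) ^ (-2 : ℝ))) := by
  have hχ0 : (0:ℝ) < χ := lt_trans one_pos hχ1
  have hχm : (0:ℝ) < χ - 1 := by linarith
  have hlogχ : 0 < Real.log χ := Real.log_pos hχ1
  have hc2pos : 0 < c2 := by rw [hc2]; positivity
  set A : ℝ := c1 + Real.log (2 * eta / (χ - 1)) with hA
  -- Step 1: Lf tol + 1 → ∞
  have hx : Tendsto (fun tol => Lf tol + 1) (nhdsWithin 0 (Set.Ioi 0)) atTop := by
    have h0 : Tendsto (fun tol : ℝ => -Real.log tol) (nhdsWithin 0 (Set.Ioi 0)) atTop :=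
      tendsto_neg_atBot_atTop.comp Real.tendsto_log_nhdsGT_zero
    have h1 := tendsto_atTop_add_const_right _ A h0
    have h2 := h1.const_mul_atTop (show (0:ℝ) < χ / c2 by positivity)
    refine h2.congr fun tol => ?_
    rw [hLf tol, hA, one_div, Real.log_inv]
    ring
  -- Step 2: composition with Fsum
  have hF := (Fsum_tendsto χ eta Q_W Q_S V0 C_alpha A c2 hχ1 heta).comp hx
  have hexp := (Real.continuous_exp.tendsto _).comp hF
  -- Step 3: value of the limit
  have hC2 : Real.exp (Real.log (C_alpha^2 * V0) + Real.log (Q_S/V0) * (1/χ)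
        + Real.log χ * (2*χ/(χ-1)) + Real.log (2*eta/(χ-1)) * 2
        + Real.log ((1/(2*eta))^2))
      = C_alpha ^ 2 * V0 ^ ((χ - 1) / χ) * Q_S ^ (1 / χ)
        * χ ^ (2 * χ / (χ - 1)) * (χ - 1) ^ (-2 : ℝ) := by
    rw [Real.exp_add, Real.exp_add, Real.exp_add, Real.exp_add,
      Real.exp_log (by positivity : (0:ℝ) < C_alpha^2*V0),
      Real.exp_log (by positivity : (0:ℝ) < (1/(2*eta))^2),
      ← Real.rpow_def_of_pos (by positivity : (0:ℝ) < Q_S/V0),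
      ← Real.rpow_def_of_pos hχ0,
      ← Real.rpow_def_of_pos (by positivity : (0:ℝ) < 2*eta/(χ-1)),
      Real.div_rpow hQS.le hV0.le,
      show ((2*eta/(χ-1)):ℝ)^(2:ℝ) = (2*eta/(χ-1))^(2:ℕ) from by
        rw [← Real.rpow_natCast (2*eta/(χ-1)) 2]; norm_num,
      show ((χ-1):ℝ)^(-2:ℝ) = ((χ-1)^(2:ℕ))⁻¹ from by
        rw [← Real.rpow_natCast (χ-1) 2, ← Real.rpow_neg hχm.le]; norm_num,
      show ((χ-1)/χ) = 1 - 1/χ from by field_simp,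
      Real.rpow_sub hV0, Real.rpow_one]
    have hv : V0 ^ (1/χ) ≠ 0 := (Real.rpow_pos_of_pos hV0 _).ne'
    have hcm : χ - 1 ≠ 0 := hχm.ne'
    field_simp
  rw [hC2] at hexp
  -- Step 4: eventual equality
  refine hexp.congr' ?_
  filter_upwards [self_mem_nhdsWithin, hx.eventually (eventually_gt_atTop 0)] with tol htol hxpos
  simp only [Function.comp]
  rw [Set.mem_Ioi] at htol
  set x := Lf tol + 1 with hxdef
  have hE1 : 1 < Real.exp (x * Real.log χ) := by
    have := Real.exp_lt_exp.mpr (mul_pos hxpos hlogχ)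
    rwa [Real.exp_zero] at this
  have hEne : (1:ℝ) - Real.exp (x * Real.log χ) ≠ 0 := sub_ne_zero_of_ne (ne_of_lt hE1)
  have h1χ : (1:ℝ) - χ ≠ 0 := by intro h; rw [sub_eq_zero] at h; exact (ne_of_lt hχ1) h
  have hbasepos : 0 < 1 + 2*eta*(1 - Real.exp (x * Real.log χ))/(1-χ) := by
    have h2 : 0 < 2*eta*(1 - Real.exp (x * Real.log χ))/(1-χ) :=
      div_pos_of_neg_of_neg (by nlinarith) (by linarith)
    linarith
  have hEchi : χ ^ x = Real.exp (x * Real.log χ) := by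
    rw [Real.rpow_def_of_pos hχ0, mul_comm]
  have hEchiL : χ ^ (Lf tol) = Real.exp (x * Real.log χ) / χ := by
    rw [eq_div_iff hχ0.ne', ← hEchi, hxdef, ← Real.rpow_add_one hχ0.ne']
  have hlogtol : Real.log tol = A - x * c2 / χ := by
    have h := hLf tol
    rw [one_div, Real.log_inv] at h
    rw [← hxdef] at h
    rw [hA]
    field_simp at h ⊢
    linarith
  rw [hW]
  rw [hEchi, hEchiL]
  rw [Real.rpow_def_of_pos htol, Real.rpow_def_of_pos (div_pos hQS hV0),
    Real.rpow_def_of_pos hQW, Real.rpow_def_of_pos hχ0,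
    Real.rpow_def_of_pos hbasepos, Real.rpow_def_of_pos htol]
  rw [show C_alpha^2*V0 = Real.exp (Real.log (C_alpha^2*V0)) from
    (Real.exp_log (by positivity)).symm]
  rw [show (1/(2*eta))^2 = Real.exp (Real.log ((1/(2*eta))^2)) from
    (Real.exp_log (by positivity)).symm]
  simp only [← Real.exp_add]
  rw [Real.exp_eq_exp]
  unfold Fsum
  have hlb : Real.log ((1 + 2*eta*(1 - Real.exp (x * Real.log χ))/(1-χ))/Real.exp (x * Real.log χ))
      = Real.log (1 + 2*eta*(1 - Real.exp (x * Real.log χ))/(1-χ)) - x*Real.log χ := by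
    rw [Real.log_div (ne_of_gt hbasepos) (Real.exp_ne_zero _), Real.log_exp]
  rw [hlb, hlogtol]
  field_simp
  ring
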